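/- The number T_8 of directed paths of length 8 in the partition-move digraph from the empty partition back to the empty partition equals 107. (In the paper this is the number of topological equivalence classes of excellent Morse functions on the 2-sphere with 8 critical points.) -/
import Mathlib


/-- Adding one cell to the Young diagram of a partition, given as the multiset of its parts:
either append a new part equal to `1`, or increase one part by `1`. -/
def AddCell (s t : Multiset ℕ) : Prop :=
  t = 1 ::ₘ s ∨ ∃ h ∈ s, t = (h + 1) ::ₘ s.erase h

/-- The X-move on partitions: replace two parts `h₁, h₂ ≥ 2` by the single part
`h₁ + h₂ − 1`. -/
def XMove (s t : Multiset ℕ) : Prop :=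
  ∃ h₁ h₂, h₁ ∈ s ∧ h₂ ∈ s.erase h₁ ∧ 2 ≤ h₁ ∧ 2 ≤ h₂ ∧
    t = (h₁ + h₂ - 1) ::ₘ (s.erase h₁).erase h₂

/-- A move (directed edge) in the partition digraph: a U-move (add one cell), a D-move
(remove one cell, the inverse of a U-move) or an X-move, between partitions, i.e. multisets
of positive parts. -/
def PMove (s t : Multiset ℕ) : Prop :=
  0 ∉ s ∧ 0 ∉ t ∧ (AddCell s t ∨ AddCell t s ∨ XMove s t)

/-- `T L`: the number of directed paths of length `L` in the partition-move digraph from the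
empty partition back to the empty partition. -/
noncomputable def T (L : ℕ) : ℕ :=
  Nat.card {p : Fin (L + 1) → Multiset ℕ //
    p 0 = 0 ∧ p (Fin.last L) = 0 ∧ ∀ i : Fin L, PMove (p i.castSucc) (p i.succ)}

section Aux

instance decAddCell (s t : Multiset ℕ) : Decidable (AddCell s t) :=
  decidable_of_iff (t = 1 ::ₘ s ∨ ∃ h, ∃ _ : h ∈ s, t = (h + 1) ::ₘ s.erase h)
    (by simp [AddCell])

instance decXMove (s t : Multiset ℕ) : Decidable (XMove s t) :=
  decidable_of_iff (∃ h₁, ∃ _ : h₁ ∈ s, ∃ h₂, ∃ _ : h₂ ∈ s.erase h₁, 2 ≤ h₁ ∧ 2 ≤ h₂ ∧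
      t = (h₁ + h₂ - 1) ::ₘ (s.erase h₁).erase h₂) (by
    constructor
    · rintro ⟨h₁, m₁, h₂, m₂, a, b, rfl⟩
      exact ⟨h₁, h₂, m₁, m₂, a, b, rfl⟩
    · rintro ⟨h₁, h₂, m₁, m₂, a, b, rfl⟩
      exact ⟨h₁, m₁, h₂, m₂, a, b, rfl⟩)

instance decPMove (s t : Multiset ℕ) : Decidable (PMove s t) := by
  unfold PMove; infer_instance

/-- Candidate multiset containing all `PMove`-neighbours of `s`. -/
def cand (s : Multiset ℕ) : Multiset (Multiset ℕ) :=
  (1 ::ₘ s) ::ₘ s.erase 1 ::ₘ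
    ((s.map fun h => (h + 1) ::ₘ s.erase h) +
     (s.map fun h => (h - 1) ::ₘ s.erase h) +
     (s.bind fun h₁ => (s.erase h₁).map fun h₂ =>
        (h₁ + h₂ - 1) ::ₘ (s.erase h₁).erase h₂))

lemma mem_cand_of_pmove {s t : Multiset ℕ} (h : PMove s t) : t ∈ cand s := by
  obtain ⟨-, -, h | h | h⟩ := h
  · rcases h with rfl | ⟨a, ha, rfl⟩
    · exact Multiset.mem_cons_self _ _
    · refine Multiset.mem_cons_of_mem (Multiset.mem_cons_of_mem ?_)
      refine Multiset.mem_add.2 (Or.inl (Multiset.mem_add.2 (Or.inl ?_)))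
      exact Multiset.mem_map.2 ⟨a, ha, rfl⟩
  · rcases h with h1 | ⟨a, ha, hs⟩
    · have : t = s.erase 1 := by rw [h1, Multiset.erase_cons_head]
      rw [this]
      exact Multiset.mem_cons_of_mem (Multiset.mem_cons_self _ _)
    · have hmem : a + 1 ∈ s := hs ▸ Multiset.mem_cons_self _ _
      have herase : s.erase (a + 1) = t.erase a := by rw [hs, Multiset.erase_cons_head]
      have : t = (a + 1 - 1) ::ₘ s.erase (a + 1) := by
        rw [herase]; simpa using (Multiset.cons_erase ha).symm
      rw [this]
      refine Multiset.mem_cons_of_mem (Multiset.mem_cons_of_mem ?_)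
      refine Multiset.mem_add.2 (Or.inl (Multiset.mem_add.2 (Or.inr ?_)))
      exact Multiset.mem_map.2 ⟨a + 1, hmem, rfl⟩
  · obtain ⟨h₁, h₂, m₁, m₂, -, -, rfl⟩ := h
    refine Multiset.mem_cons_of_mem (Multiset.mem_cons_of_mem ?_)
    refine Multiset.mem_add.2 (Or.inr ?_)
    refine Multiset.mem_bind.2 ⟨h₁, m₁, ?_⟩
    exact Multiset.mem_map.2 ⟨h₂, m₂, rfl⟩

/-- The neighbours of `s` under `PMove`, as a `Finset`. -/
def nbrs (s : Multiset ℕ) : Finset (Multiset ℕ) :=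
  (cand s).toFinset.filter (fun t => PMove s t)

lemma mem_nbrs {s t : Multiset ℕ} : t ∈ nbrs s ↔ PMove s t :=
  ⟨fun h => (Finset.mem_filter.1 h).2,
   fun h => Finset.mem_filter.2 ⟨Multiset.mem_toFinset.2 (mem_cand_of_pmove h), h⟩⟩

lemma addCell_sum {s t : Multiset ℕ} (h : AddCell s t) : t.sum = s.sum + 1 := by
  rcases h with rfl | ⟨a, ha, rfl⟩
  · rw [Multiset.sum_cons]; omega
  · rw [Multiset.sum_cons]
    have : s.sum = a + (s.erase a).sum := by
      conv_lhs => rw [← Multiset.cons_erase ha]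
      rw [Multiset.sum_cons]
    omega

lemma xMove_sum {s t : Multiset ℕ} (h : XMove s t) : s.sum = t.sum + 1 := by
  obtain ⟨h₁, h₂, m₁, m₂, a, b, rfl⟩ := h
  have hs : s.sum = h₁ + (h₂ + ((s.erase h₁).erase h₂).sum) := by
    conv_lhs => rw [← Multiset.cons_erase m₁]
    rw [Multiset.sum_cons]
    congr 1
    conv_lhs => rw [← Multiset.cons_erase m₂]
    rw [Multiset.sum_cons]
  rw [Multiset.sum_cons, hs]
  omega

lemma pmove_sum_le {s t : Multiset ℕ} (h : PMove s t) :
    s.sum ≤ t.sum + 1 ∧ t.sum ≤ s.sum + 1 := by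
  obtain ⟨-, -, h | h | h⟩ := h
  · have := addCell_sum h; omega
  · have := addCell_sum h; omega
  · have := xMove_sum h; omega

/-- Transfer-matrix style path count. -/
def cnt : ℕ → Multiset ℕ → ℕ
  | 0, s => if s = 0 then 1 else 0
  | n + 1, s => if s.sum ≤ n + 1 then ∑ t ∈ nbrs s, cnt n t else 0

/-- Paths of length `n` from `s` to the empty partition. -/
def Paths (n : ℕ) (s : Multiset ℕ) :=
  {p : Fin (n + 1) → Multiset ℕ //
    p 0 = s ∧ p (Fin.last n) = 0 ∧ ∀ i : Fin n, PMove (p i.castSucc) (p i.succ)}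

lemma one_eq_succ_zero (n : ℕ) : (1 : Fin (n + 2)) = (0 : Fin (n + 1)).succ := by
  ext; simp

lemma head_move {n : ℕ} {s : Multiset ℕ} (p : Paths (n + 1) s) : PMove s (p.1 1) := by
  have h := p.2.2.2 0
  rw [Fin.castSucc_zero, p.2.1] at h
  rwa [one_eq_succ_zero]

/-- The tail of a path. -/
def tailPath {n : ℕ} {s : Multiset ℕ} (p : Paths (n + 1) s) : Paths n (p.1 1) := by
  refine ⟨fun i => p.1 i.succ, ?_, ?_, ?_⟩
  · show p.1 (Fin.succ 0) = p.1 1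
    rw [← one_eq_succ_zero]
  · show p.1 (Fin.last n).succ = 0
    rw [Fin.succ_last]; exact p.2.2.1
  · intro i
    show PMove (p.1 i.castSucc.succ) (p.1 i.succ.succ)
    have h := p.2.2.2 i.succ
    rwa [← Fin.succ_castSucc] at h

/-- Extending a path by one move at the head. -/
def consPath {n : ℕ} {s t : Multiset ℕ} (ht : PMove s t) (q : Paths n t) :
    Paths (n + 1) s := by
  refine ⟨Fin.cons s q.1, Fin.cons_zero _ _, ?_, ?_⟩
  · show (Fin.cons s q.1 : Fin (n + 2) → Multiset ℕ) (Fin.last (n + 1)) = 0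
    rw [← Fin.succ_last, Fin.cons_succ]
    exact q.2.2.1
  · intro i
    rcases Fin.eq_zero_or_eq_succ i with rfl | ⟨j, rfl⟩
    · rw [Fin.castSucc_zero, Fin.cons_zero, Fin.cons_succ, q.2.1]
      exact ht
    · rw [← Fin.succ_castSucc, Fin.cons_succ, Fin.cons_succ]
      exact q.2.2.2 j

lemma consPath_one {n : ℕ} {s t : Multiset ℕ} (ht : PMove s t) (q : Paths n t) :
    (consPath ht q).1 1 = t := by
  show (Fin.cons s q.1 : Fin (n + 2) → Multiset ℕ) 1 = t
  rw [one_eq_succ_zero, Fin.cons_succ, q.2.1]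

lemma sum_le_of_path : ∀ n (s : Multiset ℕ), Paths n s → s.sum ≤ n := by
  intro n
  induction n with
  | zero =>
    intro s p
    have h0 : p.1 0 = s := p.2.1
    have h1 : p.1 (Fin.last 0) = 0 := p.2.2.1
    have h2 : p.1 0 = p.1 (Fin.last 0) := congrArg p.1 (Fin.fin_one_eq_zero _).symm
    rw [h0, h1] at h2
    simp [h2]
  | succ n ih =>
    intro s p
    have h1 := ih _ (tailPath p)
    have h2 := (pmove_sum_le (head_move p)).1
    omega

lemma isEmpty_paths {n : ℕ} {s : Multiset ℕ} (h : n < s.sum) : IsEmpty (Paths n s) :=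
  ⟨fun p => absurd (sum_le_of_path n s p) (by omega)⟩

/-- The key recursion equivalence. -/
def pathsEquiv (n : ℕ) (s : Multiset ℕ) :
    Paths (n + 1) s ≃ Σ t : {t // t ∈ nbrs s}, Paths n t.1 := by
  refine Equiv.trans
    (Equiv.sigmaSubtypeFiberEquiv (fun p : Paths (n + 1) s => p.1 1) (· ∈ nbrs s)
      (fun p => mem_nbrs.2 (head_move p))).symm
    (Equiv.sigmaCongrRight fun t => ?_)
  have ht : PMove s t.1 := mem_nbrs.1 t.2
  refine ⟨fun q => ⟨(tailPath q.1).1, (tailPath q.1).2.1.trans q.2,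
      (tailPath q.1).2.2.1, (tailPath q.1).2.2.2⟩,
    fun q => ⟨consPath ht q, consPath_one ht q⟩, ?_, ?_⟩
  · rintro ⟨⟨p, hp⟩, h1⟩
    refine Subtype.ext (Subtype.ext ?_)
    show (Fin.cons s (fun i => p i.succ) : Fin (n + 2) → Multiset ℕ) = p
    rw [← hp.1]
    exact Fin.cons_self_tail p
  · rintro ⟨q, hq⟩
    refine Subtype.ext ?_
    show (fun i => (Fin.cons s q : Fin (n + 2) → Multiset ℕ) i.succ) = q
    funext i
    rw [Fin.cons_succ]

lemma finite_paths : ∀ n (s : Multiset ℕ), Finite (Paths n s) := by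
  intro n
  induction n with
  | zero =>
    intro s
    have : Subsingleton (Paths 0 s) := by
      constructor
      rintro ⟨p, hp⟩ ⟨q, hq⟩
      refine Subtype.ext (funext fun i => ?_)
      have hi : i = 0 := Fin.fin_one_eq_zero _
      rw [hi]
      show p 0 = q 0
      rw [hp.1, hq.1]
    infer_instance
  | succ n ih =>
    intro s
    haveI : ∀ t : {t // t ∈ nbrs s}, Finite (Paths n t.1) := fun t => ih t.1
    exact Finite.of_equiv _ (pathsEquiv n s).symm

lemma card_paths : ∀ n (s : Multiset ℕ), Nat.card (Paths n s) = cnt n s := by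
  intro n
  induction n with
  | zero =>
    intro s
    show _ = if s = 0 then 1 else 0
    split
    · next h =>
      subst h
      rw [Nat.card_eq_one_iff_unique]
      constructor
      · constructor
        rintro ⟨p, hp⟩ ⟨q, hq⟩
        refine Subtype.ext (funext fun i => ?_)
        have hi : i = 0 := Fin.fin_one_eq_zero _
        rw [hi]
        show p 0 = q 0
        rw [hp.1, hq.1]
      · exact ⟨⟨fun _ => 0, rfl, rfl, fun i => i.elim0⟩⟩
    · next h =>
      have : IsEmpty (Paths 0 (s : Multiset ℕ)) := by
        constructor
        rintro ⟨p, hp⟩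
        have h2 : p 0 = p (Fin.last 0) := congrArg p (Fin.fin_one_eq_zero _).symm
        exact h (by rw [← hp.1, h2, hp.2.1])
      exact Nat.card_of_isEmpty
  | succ n ih =>
    intro s
    show _ = if s.sum ≤ n + 1 then ∑ t ∈ nbrs s, cnt n t else 0
    split
    · next h =>
      haveI : ∀ t : {t // t ∈ nbrs s}, Fintype (Paths n t.1) :=
        fun t => @Fintype.ofFinite _ (finite_paths n t.1)
      rw [Nat.card_congr (pathsEquiv n s), Nat.card_eq_fintype_card, Fintype.card_sigma]
      rw [← Finset.sum_coe_sort (nbrs s) (fun t => cnt n t)]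
      congr 1
      funext t
      rw [← ih t.1, Nat.card_eq_fintype_card]
    · next h =>
      haveI := isEmpty_paths (s := s) (n := n + 1) (by omega)
      exact Nat.card_of_isEmpty

end Aux

/-- There are exactly `107` closed directed paths of length `8` at the empty partition in the
partition-move digraph (the number of topological equivalence classes of excellent Morse
functions on `S²` with `8` critical points). -/
theorem T_eight : T 8 = 107 := by
  have h : T 8 = Nat.card (Paths 8 0) := rfl
  rw [h, card_paths]
  set_option maxRecDepth 4000 in decide
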